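/- Let (A_n)_{n≥−m} be a persistent positive solution of A_{n+1} = A_n·F(A_{n−m}). Then there exist two-sided sequences (P_n)_{n∈ℤ} and (Q_n)_{n∈ℤ} of positive reals satisfying P_{n+1} = P_n·F(P_{n−m}) and Q_{n+1} = Q_n·F(Q_{n−m}) for all n ∈ ℤ, such that P_0 = limsup_{n→∞} A_n, Q_0 = liminf_{n→∞} A_n, and Q_0 ≤ P_n ≤ P_0 and Q_0 ≤ Q_n ≤ P_0 for all n ∈ ℤ. -/

import Mathlib

open Filter Topology

/-- Auxiliary: from a cluster point `L` of a (eventually bounded in `[c,C]`) solution,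
construct a full limiting sequence through `L`, with limits respecting any eventual bounds. -/
lemma aux_full_limiting (m : ℕ) (F : ℝ → ℝ)
    (hcont : ContinuousOn F (Set.Ioi (0 : ℝ)))
    (A : ℤ → ℝ)
    (hArec : ∀ n : ℤ, 0 ≤ n → A (n + 1) = A n * F (A (n - m)))
    (c C : ℝ) (hc : 0 < c)
    (hbd : ∀ᶠ n in atTop, A n ∈ Set.Icc c C)
    (L : ℝ) (hL : MapClusterPt L atTop A) :
    ∃ P : ℤ → ℝ,
      (∀ n : ℤ, P n ∈ Set.Icc c C) ∧
      (∀ n : ℤ, P (n + 1) = P n * F (P (n - m))) ∧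
      P 0 = L ∧
      (∀ b : ℝ, (∀ᶠ n in atTop, A n ≤ b) → ∀ j : ℤ, P j ≤ b) ∧
      (∀ b : ℝ, (∀ᶠ n in atTop, b ≤ A n) → ∀ j : ℤ, b ≤ P j) := by
  obtain ⟨U, hUle, hUtend⟩ := mapClusterPt_iff_ultrafilter.1 hL
  -- eventual facts along atTop shifted by j hold along U
  have hshift : ∀ (j : ℤ) (p : ℤ → Prop), (∀ᶠ n in atTop, p n) →
      ∀ᶠ n in (U : Filter ℤ), p (n + j) := by
    intro j p hp
    exact hUle ((tendsto_atTop_add_const_right atTop j tendsto_id).eventually hp)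
  have hbdj : ∀ j : ℤ, ∀ᶠ n in (U : Filter ℤ), A (n + j) ∈ Set.Icc c C :=
    fun j => hshift j _ hbd
  have hex : ∀ j : ℤ, ∃ x ∈ Set.Icc c C,
      Tendsto (fun n => A (n + j)) (U : Filter ℤ) (𝓝 x) := by
    intro j
    have hmap : ↑(U.map (fun n => A (n + j))) ≤ 𝓟 (Set.Icc c C) := by
      rw [le_principal_iff]
      exact mem_map.2 (hbdj j)
    obtain ⟨x, hx, hx'⟩ := isCompact_Icc.ultrafilter_le_nhds _ hmap
    exact ⟨x, hx, hx'⟩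
  choose P hPmem hPtend using hex
  refine ⟨P, hPmem, ?_, ?_, ?_, ?_⟩
  · -- recurrence
    intro j
    have h1 : Tendsto (fun n => A (n + (j + 1))) (U : Filter ℤ) (𝓝 (P (j + 1))) :=
      hPtend (j + 1)
    have h2 : Tendsto (fun n => A (n + j)) (U : Filter ℤ) (𝓝 (P j)) := hPtend j
    have h3 : Tendsto (fun n => A (n + (j - m))) (U : Filter ℤ) (𝓝 (P (j - m))) :=
      hPtend (j - m)
    have hFcont : ContinuousAt F (P (j - m)) := by
      have hpos : P (j - m) ∈ Set.Ioi (0 : ℝ) := lt_of_lt_of_le hc (hPmem (j - m)).1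
      exact hcont.continuousAt (isOpen_Ioi.mem_nhds hpos)
    have h4 : Tendsto (fun n => A (n + j) * F (A (n + (j - m)))) (U : Filter ℤ)
        (𝓝 (P j * F (P (j - m)))) :=
      h2.mul ((hFcont.tendsto).comp h3)
    have heq : ∀ᶠ n in (U : Filter ℤ),
        A (n + (j + 1)) = A (n + j) * F (A (n + (j - m))) := by
      have hev : ∀ᶠ n in atTop, A (n + (j + 1)) = A (n + j) * F (A (n + (j - m))) := by
        filter_upwards [eventually_ge_atTop (-j)] with n hn
        have h0 : (0 : ℤ) ≤ n + j := by omega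
        have := hArec (n + j) h0
        have e1 : n + (j + 1) = n + j + 1 := by ring
        have e2 : n + (j - m) = n + j - m := by ring
        rw [e1, e2, this]
      exact hUle hev
    exact tendsto_nhds_unique ((tendsto_congr' heq).1 h1) h4
  · -- P 0 = L
    have h0 : Tendsto (fun n => A (n + 0)) (U : Filter ℤ) (𝓝 (P 0)) := hPtend 0
    have h0' : Tendsto A (U : Filter ℤ) (𝓝 (P 0)) := by
      simpa using h0
    exact tendsto_nhds_unique h0' hUtend
  · -- upper bounds
    intro b hb j
    exact le_of_tendsto (hPtend j) (hshift j _ hb)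
  · -- lower bounds
    intro b hb j
    exact ge_of_tendsto (hPtend j) (hshift j _ hb)

theorem stmt_3 (m : ℕ) (F : ℝ → ℝ)
    (hFpos : ∀ x : ℝ, 0 < x → 0 < F x)
    (hcont : ContinuousOn F (Set.Ioi (0 : ℝ)))
    (A : ℤ → ℝ)
    (hApos : ∀ n : ℤ, -(m : ℤ) ≤ n → 0 < A n)
    (hArec : ∀ n : ℤ, 0 ≤ n → A (n + 1) = A n * F (A (n - m)))
    (hpers : 0 < Filter.liminf (fun n => (A n : EReal)) Filter.atTop ∧
      Filter.limsup (fun n => (A n : EReal)) Filter.atTop < ⊤) :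
    ∃ P Q : ℤ → ℝ,
      (∀ n : ℤ, 0 < P n) ∧ (∀ n : ℤ, 0 < Q n) ∧
      (∀ n : ℤ, P (n + 1) = P n * F (P (n - m))) ∧
      (∀ n : ℤ, Q (n + 1) = Q n * F (Q (n - m))) ∧
      P 0 = Filter.limsup A Filter.atTop ∧
      Q 0 = Filter.liminf A Filter.atTop ∧
      (∀ n : ℤ, Q 0 ≤ P n ∧ P n ≤ P 0) ∧
      (∀ n : ℤ, Q 0 ≤ Q n ∧ Q n ≤ P 0) := by
  obtain ⟨hlo, hhi⟩ := hpers
  -- get real bounds c, C with c > 0 and eventually c ≤ A n ≤ C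
  obtain ⟨C, hCgt, hCtop⟩ := EReal.lt_iff_exists_real_btwn.1 hhi
  obtain ⟨c, hc0, hclt⟩ := EReal.lt_iff_exists_real_btwn.1 hlo
  have hevC : ∀ᶠ n in atTop, A n ≤ C := by
    have := eventually_lt_of_limsup_lt hCgt
    filter_upwards [this] with n hn
    exact le_of_lt (by exact_mod_cast hn)
  have hevc : ∀ᶠ n in atTop, c ≤ A n := by
    have := eventually_lt_of_lt_liminf hclt
    filter_upwards [this] with n hn
    exact le_of_lt (by exact_mod_cast hn)
  have hc0' : (0 : ℝ) < c := by exact_mod_cast hc0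
  have hbd : ∀ᶠ n in atTop, A n ∈ Set.Icc c C := by
    filter_upwards [hevc, hevC] with n h1 h2 using ⟨h1, h2⟩
  have hBle : IsBoundedUnder (· ≤ ·) atTop A := ⟨C, eventually_map.2 hevC⟩
  have hBge : IsBoundedUnder (· ≥ ·) atTop A := ⟨c, eventually_map.2 hevc⟩
  set S := limsup A atTop with hS
  set I := liminf A atTop with hI
  -- S is a cluster point
  have hSclust : MapClusterPt S atTop A := by
    rw [mapClusterPt_iff_frequently]
    intro s hs
    obtain ⟨ε, hε, hball⟩ := Metric.mem_nhds_iff.1 hs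
    have hfreq : ∃ᶠ n in atTop, S - ε < A n :=
      frequently_lt_of_lt_limsup hBge.isCoboundedUnder_le (by linarith)
    have hevub : ∀ᶠ n in atTop, A n < S + ε :=
      eventually_lt_of_limsup_lt (by linarith) hBle
    refine (hfreq.and_eventually hevub).mono fun n ⟨h1, h2⟩ => hball ?_
    rw [Metric.mem_ball, Real.dist_eq, abs_lt]
    constructor <;> linarith
  have hIclust : MapClusterPt I atTop A := by
    rw [mapClusterPt_iff_frequently]
    intro s hs
    obtain ⟨ε, hε, hball⟩ := Metric.mem_nhds_iff.1 hs
    have hfreq : ∃ᶠ n in atTop, A n < I + ε :=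
      frequently_lt_of_liminf_lt hBle.isCoboundedUnder_ge (by linarith)
    have hevlb : ∀ᶠ n in atTop, I - ε < A n :=
      eventually_lt_of_lt_liminf (by linarith) hBge
    refine (hfreq.and_eventually hevlb).mono fun n ⟨h1, h2⟩ => hball ?_
    rw [Metric.mem_ball, Real.dist_eq, abs_lt]
    constructor <;> linarith
  obtain ⟨P, hPmem, hPrec, hP0, hPub, hPlb⟩ :=
    aux_full_limiting m F hcont A hArec c C hc0' hbd S hSclust
  obtain ⟨Q, hQmem, hQrec, hQ0, hQub, hQlb⟩ :=
    aux_full_limiting m F hcont A hArec c C hc0' hbd I hIclust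
  have hPpos : ∀ n : ℤ, 0 < P n := fun n => lt_of_lt_of_le hc0' (hPmem n).1
  have hQpos : ∀ n : ℤ, 0 < Q n := fun n => lt_of_lt_of_le hc0' (hQmem n).1
  -- bounds: I ≤ P j ≤ S and I ≤ Q j ≤ S
  have hubS : ∀ (R : ℤ → ℝ), (∀ b : ℝ, (∀ᶠ n in atTop, A n ≤ b) → ∀ j : ℤ, R j ≤ b) →
      ∀ j : ℤ, R j ≤ S := by
    intro R hR j
    refine le_of_forall_pos_le_add fun ε hε => ?_
    exact hR (S + ε) ((eventually_lt_of_limsup_lt (by linarith) hBle).mono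
      fun n hn => le_of_lt hn) j
  have hlbI : ∀ (R : ℤ → ℝ), (∀ b : ℝ, (∀ᶠ n in atTop, b ≤ A n) → ∀ j : ℤ, b ≤ R j) →
      ∀ j : ℤ, I ≤ R j := by
    intro R hR j
    refine le_of_forall_pos_le_add fun ε hε => ?_
    have : I - ε ≤ R j :=
      hR (I - ε) ((eventually_lt_of_lt_liminf (by linarith) hBge).mono
        fun n hn => le_of_lt hn) j
    linarith
  exact ⟨P, Q, hPpos, hQpos, hPrec, hQrec, hP0, hQ0,
    fun n => ⟨hQ0 ▸ hlbI P hPlb n, hP0 ▸ hubS P hPub n⟩,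
    fun n => ⟨hQ0 ▸ hlbI Q hQlb n, hP0 ▸ hubS Q hQub n⟩⟩
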